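/- arXiv:1306.2492 — 2 statements merged into one kernel-verified Lean document; each statement's English description precedes it below -/
import Mathlib

section
/- Let a, b be real numbers and n a nonnegative integer such that (a+b−n+1/2)_k ≠ 0 for all 0 ≤ k ≤ ⌊n/2⌋. Then the function y(x) = A_n^{(a,b)}(x) satisfies, for all real x, the differential equation x²(x²+1) y''(x) − 2x((a+b−1)x² + a) y'(x) + (n(2a+2b−(n+1)) x² + (1−(−1)^n) a) y(x) = 0. -/
open Real Finset

noncomputable section

/-- Pochhammer symbol `(r)_k = r (r+1) ⋯ (r+k-1)`. -/
def poch (r : ℝ) (k : ℕ) : ℝ := ∏ i ∈ Finset.range k, (r + i)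

/-- The monic polynomial `A_n^{(a,b)}(x)`. -/
def A (a b : ℝ) (n : ℕ) (x : ℝ) : ℝ :=
  ∑ k ∈ Finset.range (n / 2 + 1),
    poch (-(n / 2 : ℕ) : ℝ) k * poch (a + 1/2 - ((n + 1) / 2 : ℕ)) k * (-1) ^ k /
      (poch (a + b - n + 1/2) k * (Nat.factorial k)) * x ^ (n - 2 * k)

def Ac (a b : ℝ) (n k : ℕ) : ℝ :=
  poch (-(n / 2 : ℕ) : ℝ) k * poch (a + 1/2 - ((n + 1) / 2 : ℕ)) k * (-1) ^ k /
      (poch (a + b - n + 1/2) k * (Nat.factorial k))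

lemma poch_succ (r : ℝ) (k : ℕ) : poch r (k+1) = poch r k * (r + k) := by
  simp [poch, Finset.prod_range_succ]

lemma cast_pred_mul (m : ℕ) : ((m:ℝ)) * ((m-1 : ℕ):ℝ) = (m:ℝ) * ((m:ℝ) - 1) := by
  cases m with
  | zero => simp
  | succ m => push_cast [Nat.succ_sub_one]; ring

lemma A_eq (a b : ℝ) (n : ℕ) :
    A a b n = fun x => ∑ k ∈ Finset.range (n / 2 + 1), Ac a b n k * x ^ (n - 2 * k) := rfl

lemma hasDerivAt_A (a b : ℝ) (n : ℕ) (x : ℝ) :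
    HasDerivAt (A a b n)
      (∑ k ∈ Finset.range (n / 2 + 1),
        Ac a b n k * (((n - 2*k : ℕ):ℝ) * x ^ (n - 2*k - 1))) x := by
  rw [A_eq]
  exact HasDerivAt.fun_sum fun k _ => (hasDerivAt_pow _ x).const_mul _

lemma deriv_A (a b : ℝ) (n : ℕ) :
    deriv (A a b n) = fun x => ∑ k ∈ Finset.range (n / 2 + 1),
      Ac a b n k * (((n - 2*k : ℕ):ℝ) * x ^ (n - 2*k - 1)) :=
  funext fun x => (hasDerivAt_A a b n x).deriv

lemma iteratedDeriv_two_A (a b : ℝ) (n : ℕ) (x : ℝ) :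
    iteratedDeriv 2 (A a b n) x = ∑ k ∈ Finset.range (n / 2 + 1),
      Ac a b n k * (((n - 2*k : ℕ):ℝ) * (((n - 2*k - 1 : ℕ):ℝ) * x ^ (n - 2*k - 1 - 1))) := by
  rw [show (2:ℕ) = 1 + 1 from rfl, iteratedDeriv_succ, iteratedDeriv_one, deriv_A]
  exact (HasDerivAt.fun_sum fun k _ =>
    ((hasDerivAt_pow _ x).const_mul _).const_mul (Ac a b n k)).deriv

/-- `x * x^(m-1) * m = m * x^m` even with nat subtraction. -/
lemma x_mul_pow (x : ℝ) (m : ℕ) :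
    (m:ℝ) * (x * x ^ (m - 1)) = (m:ℝ) * x ^ m := by
  cases m with
  | zero => simp
  | succ m => rw [Nat.succ_sub_one]; ring

lemma x2_mul_pow (x : ℝ) (m : ℕ) :
    (m:ℝ) * ((m-1:ℕ):ℝ) * (x^2 * x ^ (m - 1 - 1)) = (m:ℝ) * ((m-1:ℕ):ℝ) * x ^ m := by
  match m with
  | 0 => simp
  | 1 => simp
  | (m+2) => rw [show m+2-1-1 = m from rfl]; ring

theorem ode_A (a b : ℝ) (n : ℕ)
    (h : ∀ k ≤ n / 2, poch (a + b - n + 1/2) k ≠ 0) (x : ℝ) :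
    x ^ 2 * (x ^ 2 + 1) * iteratedDeriv 2 (A a b n) x
      - 2 * x * ((a + b - 1) * x ^ 2 + a) * deriv (A a b n) x
      + ((n : ℝ) * (2 * a + 2 * b - ((n : ℝ) + 1)) * x ^ 2 + (1 - (-1) ^ n) * a) * A a b n x
      = 0 := by
  set N := n / 2 with hNdef
  set c : ℕ → ℝ := Ac a b n with hc
  set γ : ℝ := (n : ℝ) * (2 * a + 2 * b - ((n : ℝ) + 1)) with hγ
  set δ : ℝ := (1 - (-1:ℝ) ^ n) * a with hδ
  set Af : ℝ → ℝ := fun t => t * (t - 1) - 2 * (a + b - 1) * t + γ with hAf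
  set Bf : ℝ → ℝ := fun t => t * (t - 1) - 2 * a * t + δ with hBf
  have hN2 : 2 * N ≤ n := by omega
  -- Step 1: LHS as a single sum
  have step1 : x ^ 2 * (x ^ 2 + 1) * iteratedDeriv 2 (A a b n) x
      - 2 * x * ((a + b - 1) * x ^ 2 + a) * deriv (A a b n) x
      + (γ * x ^ 2 + δ) * A a b n x
      = ∑ k ∈ Finset.range (N + 1),
          (c k * (Af ((n - 2*k : ℕ):ℝ) * (x^2 * x ^ (n - 2*k)))
           + c k * (Bf ((n - 2*k : ℕ):ℝ) * x ^ (n - 2*k))) := by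
    rw [iteratedDeriv_two_A, deriv_A, A_eq]
    simp only [Finset.mul_sum]
    rw [← Finset.sum_sub_distrib, ← Finset.sum_add_distrib]
    apply Finset.sum_congr rfl
    intro k _
    have h1 := x_mul_pow x (n - 2*k)
    have h2 := x2_mul_pow x (n - 2*k)
    have h3 := cast_pred_mul (n - 2*k)
    set m := n - 2*k
    set t : ℝ := ((m:ℕ):ℝ)
    -- expand
    calc x ^ 2 * (x ^ 2 + 1) * (c k * (t * (((m - 1 : ℕ):ℝ) * x ^ (m - 1 - 1))))
          - 2 * x * ((a + b - 1) * x ^ 2 + a) * (c k * (t * x ^ (m - 1)))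
          + (γ * x ^ 2 + δ) * (c k * x ^ m)
        = (x^2 + 1) * (c k * (t * ((m-1:ℕ):ℝ) * (x^2 * x ^ (m-1-1))))
          - 2 * ((a + b - 1) * x ^ 2 + a) * (c k * (t * (x * x ^ (m - 1))))
          + (γ * x ^ 2 + δ) * (c k * x ^ m) := by ring
      _ = (x^2 + 1) * (c k * (t * ((m-1:ℕ):ℝ) * x ^ m))
          - 2 * ((a + b - 1) * x ^ 2 + a) * (c k * (t * x ^ m))
          + (γ * x ^ 2 + δ) * (c k * x ^ m) := by rw [h1, h2]
      _ = c k * (Af t * (x^2 * x ^ m)) + c k * (Bf t * x ^ m) := by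
          simp only [hAf, hBf]
          rw [show t * ((m-1:ℕ):ℝ) = t * (t - 1) from h3]
          ring
  rw [step1, Finset.sum_add_distrib]
  -- peel first term of the Af-sum
  rw [Finset.sum_range_succ' (fun k => c k * (Af ((n - 2*k : ℕ):ℝ) * (x^2 * x ^ (n - 2*k)))) N]
  -- peel last term of the Bf-sum
  rw [Finset.sum_range_succ (fun k => c k * (Bf ((n - 2*k : ℕ):ℝ) * x ^ (n - 2*k))) N]
  have hAf0 : Af ((n - 2*0 : ℕ):ℝ) = 0 := by
    simp only [hAf, hγ]; norm_num; ring
  have hBfN : Bf ((n - 2*N : ℕ):ℝ) = 0 := by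
    rcases Nat.even_or_odd n with ⟨t, ht⟩ | ⟨t, ht⟩
    · have hNt : N = t := by omega
      have hnt : n - 2*N = 0 := by omega
      have hpow : ((-1:ℝ)) ^ n = 1 := by
        rw [ht, show t + t = 2*t by ring, pow_mul]; norm_num
      simp [hBf, hδ, hnt, hpow]
    · have hnt : n - 2*N = 1 := by omega
      have hpow : ((-1:ℝ)) ^ n = -1 := by
        rw [ht, pow_succ, pow_mul]; norm_num
      simp [hBf, hδ, hnt, hpow]; ring
  rw [hAf0, hBfN]
  simp only [mul_zero, zero_mul, add_zero]
  rw [← Finset.sum_add_distrib]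
  apply Finset.sum_eq_zero
  intro k hk
  have hkN : k < N := Finset.mem_range.mp hk
  have hk2 : 2*(k+1) ≤ n := by omega
  have hcast1 : ((n - 2*(k+1) : ℕ):ℝ) = (n:ℝ) - 2*k - 2 := by
    rw [Nat.cast_sub hk2]; push_cast; ring
  have hcast0 : ((n - 2*k : ℕ):ℝ) = (n:ℝ) - 2*k := by
    rw [Nat.cast_sub (by omega)]; push_cast; ring
  have hpowe : x^2 * x ^ (n - 2*(k+1)) = x ^ (n - 2*k) := by
    rw [show n - 2*k = (n - 2*(k+1)) + 2 by omega, pow_add]; ring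
  set r : ℝ := a + b - n + 1/2 with hr
  set q : ℝ := a + 1/2 - ((n + 1) / 2 : ℕ) with hq
  have hA1 : Af ((n - 2*(k+1) : ℕ):ℝ) = 4*((k:ℝ)+1)*(r + k) := by
    rw [hcast1]; simp only [hAf, hγ, hr]; ring
  have hB1 : Bf ((n - 2*k : ℕ):ℝ) = -4*((N:ℝ) - k)*(q + k) := by
    rw [hcast0]
    simp only [hBf, hδ, hq]
    rcases Nat.even_or_odd n with ⟨t, ht⟩ | ⟨t, ht⟩
    · have hpow : ((-1:ℝ)) ^ n = 1 := by
        rw [ht, show t + t = 2*t by ring, pow_mul]; norm_num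
      have hnR : (n:ℝ) = 2*(N:ℝ) := by exact_mod_cast (show n = 2*N by omega)
      rw [show (n + 1) / 2 = N from by omega, hpow, hnR]
      ring
    · have hpow : ((-1:ℝ)) ^ n = -1 := by
        rw [ht, pow_succ, pow_mul]; norm_num
      have hnR : (n:ℝ) = 2*(N:ℝ)+1 := by exact_mod_cast (show n = 2*N+1 by omega)
      rw [show (n + 1) / 2 = N + 1 from by omega, hpow, hnR]
      push_cast; ring
  rw [hA1, hB1, hpowe]
  have key : c (k+1) * (4*((k:ℝ)+1)*(r + k)) + c k * (-4*((N:ℝ) - k)*(q + k)) = 0 := by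
    have hR : poch r k ≠ 0 := h k (by omega)
    have hRr : r + k ≠ 0 := by
      have := h (k+1) (by omega)
      rw [poch_succ] at this
      exact fun hz => this (by rw [hz, mul_zero])
    have hF : ((Nat.factorial k : ℕ):ℝ) ≠ 0 := Nat.cast_ne_zero.mpr k.factorial_ne_zero
    simp only [hc, Ac, ← hNdef, ← hr, ← hq, poch_succ, pow_succ, Nat.factorial_succ]
    push_cast
    field_simp
    ring
  calc c (k+1) * (4*((k:ℝ)+1)*(r + k) * x ^ (n - 2*k))
        + c k * (-4*((N:ℝ) - k)*(q + k) * x ^ (n - 2*k))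
      = (c (k+1) * (4*((k:ℝ)+1)*(r + k)) + c k * (-4*((N:ℝ) - k)*(q + k))) * x ^ (n - 2*k) := by
        ring
    _ = 0 := by rw [key, zero_mul]
end
end

section
/- Let a, b be real numbers with a < 1/2 and a + b > 1/2. Then ∫_{−∞}^{∞} |x|^{−2a} (1+x²)^{−b} dx = Γ(b+a−1/2) Γ(1/2−a) / Γ(b). -/
open MeasureTheory Real Set


-- Lemma A: real Beta integral
theorem real_beta (u v : ℝ) (hu : 0 < u) (hv : 0 < v) :
    ∫ x in (0:ℝ)..1, x ^ (u - 1) * (1 - x) ^ (v - 1) =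
      Real.Gamma u * Real.Gamma v / Real.Gamma (u + v) := by
  have h := Complex.Gamma_mul_Gamma_eq_betaIntegral
    (s := (u:ℂ)) (t := (v:ℂ)) (by simpa using hu) (by simpa using hv)
  have hbeta : Complex.betaIntegral u v =
      ((∫ x in (0:ℝ)..1, x ^ (u - 1) * (1 - x) ^ (v - 1) : ℝ) : ℂ) := by
    rw [Complex.betaIntegral, ← intervalIntegral.integral_ofReal]
    refine intervalIntegral.integral_congr fun x hx => ?_
    rw [uIcc_of_le (by norm_num)] at hx
    rw [Complex.ofReal_mul, Complex.ofReal_cpow hx.1, Complex.ofReal_cpow (by linarith [hx.2] : (0:ℝ) ≤ 1 - x)]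
    push_cast
    ring
  rw [hbeta, ← Complex.ofReal_add, Complex.Gamma_ofReal, Complex.Gamma_ofReal,
    Complex.Gamma_ofReal, ← Complex.ofReal_mul, ← Complex.ofReal_mul] at h
  have := Complex.ofReal_injective h
  field_simp [(Real.Gamma_pos_of_pos (by linarith : (0:ℝ) < u + v)).ne']
  linarith [this]

theorem real_beta_Ioi (u v : ℝ) (hu : 0 < u) (hv : 0 < v) :
    ∫ t in Ioi (0:ℝ), t ^ (u - 1) * (1 + t) ^ (-(u + v)) =
      Real.Gamma u * Real.Gamma v / Real.Gamma (u + v) := by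
  have himg : (fun x : ℝ => x / (1 - x)) '' Ioo 0 1 = Ioi 0 := by
    ext t
    constructor
    · rintro ⟨x, ⟨hx0, hx1⟩, rfl⟩
      exact div_pos hx0 (by linarith)
    · intro ht
      have ht' : (0:ℝ) < t := ht
      refine ⟨t / (1 + t), ⟨div_pos ht' (by linarith), ?_⟩, ?_⟩
      · rw [div_lt_one (by linarith)]; linarith
      · field_simp; ring
  have hderiv : ∀ x ∈ Ioo (0:ℝ) 1,
      HasDerivWithinAt (fun x : ℝ => x / (1 - x)) (1 / (1 - x) ^ 2) (Ioo 0 1) x := by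
    intro x hx
    have h1 : (1:ℝ) - x ≠ 0 := by simp only [mem_Ioo] at hx; intro h; linarith [hx.2]
    have := (hasDerivAt_id x).div ((hasDerivAt_id x).const_sub 1) h1
    refine (this.congr_deriv ?_).hasDerivWithinAt
    simp only [id]; ring
  have hinj : InjOn (fun x : ℝ => x / (1 - x)) (Ioo 0 1) := by
    intro x hx y hy h
    simp only [mem_Ioo] at hx hy
    have h1 : (1:ℝ) - x ≠ 0 := by intro h'; linarith [hx.2]
    have h2 : (1:ℝ) - y ≠ 0 := by intro h'; linarith [hy.2]
    field_simp at h
    linarith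
  have key := integral_image_eq_integral_abs_deriv_smul measurableSet_Ioo hderiv hinj
    (fun t => t ^ (u - 1) * (1 + t) ^ (-(u + v)))
  rw [himg] at key
  rw [key]
  have hcong : ∀ x ∈ Ioo (0:ℝ) 1,
      |1 / (1 - x) ^ 2| • ((x / (1 - x)) ^ (u - 1) * (1 + x / (1 - x)) ^ (-(u + v)))
        = x ^ (u - 1) * (1 - x) ^ (v - 1) := by
    intro x hx
    simp only [mem_Ioo] at hx
    have h1 : (0:ℝ) < 1 - x := by linarith [hx.2]
    have h1' : (1:ℝ) - x ≠ 0 := h1.ne'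
    have e1 : 1 + x / (1 - x) = (1 - x)⁻¹ := by field_simp; ring
    have e2 : (x / (1 - x)) ^ (u - 1) = x ^ (u - 1) / (1 - x) ^ (u - 1) :=
      Real.div_rpow hx.1.le h1.le (u - 1)
    have e3 : (1:ℝ) / (1 - x) ^ 2 = (1 - x) ^ (-2 : ℝ) := by
      rw [show (-2:ℝ) = (-(2:ℕ) : ℝ) by norm_num, Real.rpow_neg h1.le, Real.rpow_natCast, one_div]
    rw [smul_eq_mul, abs_of_pos (by positivity : (0:ℝ) < 1 / (1 - x) ^ 2), e1, e2,
      Real.inv_rpow h1.le, ← Real.rpow_neg h1.le, neg_neg, e3,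
      div_eq_mul_inv (x ^ (u - 1)), ← Real.rpow_neg h1.le]
    have comb : ∀ p q r : ℝ, (1 - x) ^ p * (x ^ (u - 1) * (1 - x) ^ q * (1 - x) ^ r)
        = x ^ (u - 1) * (1 - x) ^ (p + q + r) := by
      intro p q r
      rw [Real.rpow_add h1, Real.rpow_add h1]; ring
    rw [comb]
    congr 1
    ring
  rw [setIntegral_congr_fun measurableSet_Ioo hcong, ← MeasureTheory.integral_Ioc_eq_integral_Ioo,
    ← intervalIntegral.integral_of_le (by norm_num : (0:ℝ) ≤ 1)]
  exact real_beta u v hu hv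

theorem beta_type_integral (a b : ℝ) (ha : a < 1/2) (hab : 1/2 < a + b) :
    ∫ x : ℝ, |x| ^ (-2 * a) * (1 + x ^ 2) ^ (-b) =
      Real.Gamma (b + a - 1/2) * Real.Gamma (1/2 - a) / Real.Gamma b := by
  set u : ℝ := 1/2 - a with hu_def
  set v : ℝ := b + a - 1/2 with hv_def
  have hu : 0 < u := by simp only [hu_def]; linarith
  have hv : 0 < v := by simp only [hv_def]; linarith
  have h0 : ∫ x : ℝ, |x| ^ (-2 * a) * (1 + x ^ 2) ^ (-b)
      = 2 * ∫ x in Ioi (0:ℝ), x ^ (-2 * a) * (1 + x ^ 2) ^ (-b) := by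
    rw [← integral_comp_abs (f := fun x => x ^ (-2 * a) * (1 + x ^ 2) ^ (-b))]
    simp [sq_abs]
  have h1 : (∫ x in Ioi (0:ℝ), (|(2:ℝ)| * x ^ ((2:ℝ) - 1)) •
        ((fun t : ℝ => t ^ (u - 1) * (1 + t) ^ (-(u + v))) (x ^ (2:ℝ))))
      = ∫ t in Ioi (0:ℝ), t ^ (u - 1) * (1 + t) ^ (-(u + v)) :=
    integral_comp_rpow_Ioi (fun t : ℝ => t ^ (u - 1) * (1 + t) ^ (-(u + v))) two_ne_zero
  have h2 : ∀ x ∈ Ioi (0:ℝ), (|(2:ℝ)| * x ^ ((2:ℝ) - 1)) •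
        ((fun t : ℝ => t ^ (u - 1) * (1 + t) ^ (-(u + v))) (x ^ (2:ℝ)))
      = 2 * (x ^ (-2 * a) * (1 + x ^ 2) ^ (-b)) := by
    intro x hx
    have hx' : (0:ℝ) < x := hx
    have e1 : (x ^ (2:ℝ)) ^ (u - 1) = x ^ ((2:ℝ) * (u - 1)) :=
      (Real.rpow_mul hx'.le 2 (u - 1)).symm
    have e2 : x ^ (2:ℝ) = x ^ 2 := Real.rpow_two x
    have e3 : -(u + v) = -b := by simp only [hu_def, hv_def]; ring
    have key : (x ^ (2:ℝ)) ^ (u - 1) * (1 + x ^ (2:ℝ)) ^ (-(u + v))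
        = x ^ ((2:ℝ) * (u - 1)) * (1 + x ^ 2) ^ (-b) := by rw [e1, e2, e3]
    simp only [smul_eq_mul]
    rw [key, show |(2:ℝ)| = 2 by norm_num, show (2:ℝ) - 1 = 1 by norm_num, Real.rpow_one]
    have hxx : x * x ^ ((2:ℝ) * (u - 1)) = x ^ (-2 * a) := by
      have h := Real.rpow_add hx' 1 (2 * (u - 1))
      rw [Real.rpow_one] at h
      rw [← h]
      congr 1
      simp only [hu_def]; ring
    rw [mul_assoc, ← mul_assoc x _ _, hxx]
  rw [h0, show (2:ℝ) * ∫ x in Ioi (0:ℝ), x ^ (-2 * a) * (1 + x ^ 2) ^ (-b)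
      = ∫ x in Ioi (0:ℝ), 2 * (x ^ (-2 * a) * (1 + x ^ 2) ^ (-b))
      from (integral_const_mul 2 _).symm,
    ← setIntegral_congr_fun measurableSet_Ioi h2, h1, real_beta_Ioi u v hu hv]
  rw [show u + v = b by simp only [hu_def, hv_def]; ring]
  ring
end
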